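/- Let F be an algebraically closed field of characteristic zero, Γ an additive abelian group, ε a skew-symmetric bicharacter of Γ, and A a Γ-graded associative unital ε-commutative F-algebra. Let D be a finite-dimensional Γ-graded F-subspace of color derivations of A such that every homogeneous element of D is a homogeneous color derivation, D is ε-commutative (∂∘∂' = ε(∂̄,∂̄')·∂'∘∂ for all homogeneous ∂,∂' ∈ D), every element of D is locally finite on A, and every eigenspace of every homogeneous element of D is a Γ-graded subspace of A. If every nonzero homogeneous element u ∈ A satisfying ∂(u) ∈ F·u for all homogeneous ∂ ∈ D is a unit of A, then A is graded D-simple. -/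

import Mathlib

/-- `d` is a homogeneous color derivation of degree `lam` of the `Γ`-graded algebra `A`
(with grading `𝒜`) relative to the bicharacter `ε`. -/
def IsHomColorDer {F : Type*} [Field F] {Γ : Type*} [AddCommGroup Γ]
    {A : Type*} [Ring A] [Algebra F A]
    (ε : Γ → Γ → F) (𝒜 : Γ → Submodule F A) (lam : Γ) (d : Module.End F A) : Prop :=
  (∀ μ : Γ, ∀ a ∈ 𝒜 μ, d a ∈ 𝒜 (lam + μ)) ∧
  (∀ (l m : Γ) (a b : A), a ∈ 𝒜 l → b ∈ 𝒜 m →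
    d (a * b) = d a * b + ε lam l • (a * d b))

/-- `A` is graded `D`-simple: the only `Γ`-graded two-sided ideals of `A` stable under
all derivations in `D` are `0` and `A`. -/
def IsGradedDSimple {F : Type*} [Field F] {Γ : Type*} [AddCommGroup Γ] [DecidableEq Γ]
    {A : Type*} [Ring A] [Algebra F A]
    (𝒜 : Γ → Submodule F A) [GradedAlgebra 𝒜] (D : Set (Module.End F A)) : Prop :=
  ∀ I : Submodule F A,
    (∀ (a x : A), x ∈ I → a * x ∈ I ∧ x * a ∈ I) →
    (∀ x ∈ I, ∀ γ : Γ, (DirectSum.decompose 𝒜 x γ : A) ∈ I) →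
    (∀ d ∈ D, ∀ x ∈ I, d x ∈ I) →
    I = ⊥ ∨ I = ⊤

/-- Let `A` be a `Γ`-graded unital `ε`-commutative algebra over an
algebraically closed field of characteristic zero and `D` a finite-dimensional
`Γ`-graded `ε`-commutative subspace of locally finite color derivations whose
homogeneous elements have `Γ`-graded eigenspaces.  If every nonzero homogeneous common
eigenvector of the homogeneous elements of `D` is a unit, then `A` is graded
`D`-simple. -/
lemma aux_span_graded {F : Type*} [Field F] {Γ : Type*} [AddCommGroup Γ] [DecidableEq Γ]
    {A : Type*} [Ring A] [Algebra F A] (𝒜 : Γ → Submodule F A) [GradedAlgebra 𝒜]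
    (S : Set A) (hS : ∀ s ∈ S, ∃ γ, s ∈ 𝒜 γ) :
    ∀ x ∈ Submodule.span F S, ∀ γ, (DirectSum.decompose 𝒜 x γ : A) ∈ Submodule.span F S := by
  intro x hx γ
  induction hx using Submodule.span_induction with
  | mem s hs =>
    obtain ⟨γ₀, h⟩ := hS s hs
    rcases eq_or_ne γ₀ γ with hγ | hγ
    · subst hγ; rw [DirectSum.decompose_of_mem_same 𝒜 h]; exact Submodule.subset_span hs
    · rw [DirectSum.decompose_of_mem_ne 𝒜 h hγ]; exact Submodule.zero_mem _
  | zero => simp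
  | add x y hx hy ihx ihy =>
    rw [DirectSum.decompose_add, DirectSum.add_apply, Submodule.coe_add]
    exact Submodule.add_mem _ ihx ihy
  | smul a x hx ih =>
    rw [DirectSum.decompose_smul, DFinsupp.smul_apply, Submodule.coe_smul]
    exact Submodule.smul_mem _ _ ih

lemma aux_exists_finset {F M : Type*} [Field F] [AddCommGroup M] [Module F M]
    (U : Submodule F M) (hU : FiniteDimensional F U) (S : Set M)
    (hUS : U ≤ Submodule.span F S) :
    ∃ T : Finset M, ↑T ⊆ S ∧ U ≤ Submodule.span F (T : Set M) := by
  classical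
  haveI := hU
  obtain ⟨s, hs⟩ := (Submodule.fg_iff_finiteDimensional U).mpr hU
  have key : ∀ x : M, x ∈ U → ∃ T : Finset M, ↑T ⊆ S ∧ x ∈ Submodule.span F (T : Set M) :=
    fun x hx => Submodule.mem_span_finite_of_mem_span (hUS hx)
  choose Tf hTf1 hTf2 using key
  have hmem : ∀ x : M, x ∈ s → x ∈ U := fun x hx => by
    rw [← hs]; exact Submodule.subset_span hx
  refine ⟨s.attach.biUnion (fun x => Tf x.1 (hmem x.1 x.2)), ?_, ?_⟩
  · intro t ht
    rcases Finset.mem_biUnion.mp ht with ⟨x, -, ht'⟩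
    exact hTf1 _ _ ht'
  · rw [← hs, Submodule.span_le]
    intro x hx
    refine Submodule.span_mono ?_ (hTf2 x (hmem x hx))
    intro t ht
    exact Finset.mem_coe.mpr (Finset.mem_biUnion.mpr ⟨⟨x, hx⟩, Finset.mem_attach _ _, ht⟩)

lemma aux_pow_comm {F A : Type*} [Field F] [AddCommGroup A] [Module F A]
    {d d' : Module.End F A} {c : F} (h : d * d' = c • (d' * d)) :
    ∀ n : ℕ, d * d' ^ n = c ^ n • (d' ^ n * d) := by
  intro n
  induction n with
  | zero => simp
  | succ n ih =>
    rw [pow_succ' d', ← mul_assoc, h, smul_mul_assoc, mul_assoc, ih, mul_smul_comm, smul_smul,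
      ← mul_assoc, ← pow_succ', ← pow_succ']

theorem gradedDSimple_of_rootVectors_units
    {F : Type*} [Field F] [IsAlgClosed F] [CharZero F]
    {Γ : Type*} [AddCommGroup Γ] [DecidableEq Γ]
    {A : Type*} [Ring A] [Algebra F A]
    (ε : Γ → Γ → F)
    (hskew : ∀ l m : Γ, ε l m * ε m l = 1)
    (hmul : ∀ l m n : Γ, ε l (m + n) = ε l m * ε l n)
    (𝒜 : Γ → Submodule F A) [GradedAlgebra 𝒜]
    (hcomm : ∀ (l m : Γ) (a b : A), a ∈ 𝒜 l → b ∈ 𝒜 m → a * b = ε l m • (b * a))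
    (D : Submodule F (Module.End F A)) [FiniteDimensional F D]
    (hDgraded : D = Submodule.span F
      {d : Module.End F A | d ∈ D ∧ ∃ γ : Γ, IsHomColorDer ε 𝒜 γ d})
    (hDcomm : ∀ d d' : Module.End F A, d ∈ D → d' ∈ D → ∀ γ γ' : Γ,
      IsHomColorDer ε 𝒜 γ d → IsHomColorDer ε 𝒜 γ' d' →
      d * d' = ε γ γ' • (d' * d))
    (hDlf : ∀ d ∈ D, ∀ v : A, FiniteDimensional F
      (Submodule.span F (Set.range fun n : ℕ => (d ^ n) v)))
    (hDeig : ∀ d : Module.End F A, d ∈ D → (∃ γ : Γ, IsHomColorDer ε 𝒜 γ d) →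
      ∀ (c : F) (v : A), d v = c • v → ∀ γ' : Γ,
        d (DirectSum.decompose 𝒜 v γ' : A) = c • (DirectSum.decompose 𝒜 v γ' : A))
    (hroots : ∀ u : A, u ≠ 0 → (∃ γ : Γ, u ∈ 𝒜 γ) →
      (∀ d : Module.End F A, d ∈ D → (∃ γ : Γ, IsHomColorDer ε 𝒜 γ d) →
        ∃ c : F, d u = c • u) →
      IsUnit u) :
    IsGradedDSimple 𝒜 (D : Set (Module.End F A)) := by
  
  classical
  intro I hIdeal hIgr hID
  by_cases hIbot : I = ⊥
  · exact Or.inl hIbot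
  right
  have hne : ∀ l m : Γ, ε l m ≠ 0 := by
    intro l m h
    have h2 := hskew l m
    rw [h, zero_mul] at h2
    exact zero_ne_one h2
  have hr0 : ∀ l : Γ, ε l 0 = 1 := by
    intro l
    have h := hmul l 0 0
    rw [add_zero] at h
    exact (mul_left_cancel₀ (hne l 0) (by rw [mul_one, ← h])).symm
  have hl0 : ∀ m : Γ, ε 0 m = 1 := by
    intro m
    have h := hskew 0 m
    rw [hr0 m, mul_one] at h
    exact h
  have hcompex : ∀ y : A, y ≠ 0 → ∃ γ : Γ, (DirectSum.decompose 𝒜 y γ : A) ≠ 0 := by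
    intro y hy
    by_contra h
    push_neg at h
    apply hy
    rw [← DirectSum.sum_support_decompose 𝒜 y]
    exact Finset.sum_eq_zero fun γ _ => h γ
  have hDle : D ≤ Submodule.span F
      {d : Module.End F A | d ∈ D ∧ ∃ γ : Γ, IsHomColorDer ε 𝒜 γ d} := le_of_eq hDgraded
  obtain ⟨T, hTS, hDT⟩ := aux_exists_finset D inferInstance _ hDle
  -- Step A: build a finite-dimensional graded stable submodule of I containing v₀
  have stepA : ∀ l : List (Module.End F A),
      (∀ d ∈ l, d ∈ D ∧ ∃ γ : Γ, IsHomColorDer ε 𝒜 γ d) →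
      ∀ v₀ : A, v₀ ∈ I → (∃ γ : Γ, v₀ ∈ 𝒜 γ) →
      ∃ W : Submodule F A, v₀ ∈ W ∧ FiniteDimensional F W ∧
        (∀ x ∈ W, ∀ γ : Γ, (DirectSum.decompose 𝒜 x γ : A) ∈ W) ∧ W ≤ I ∧
        (∀ d ∈ l, ∀ x ∈ W, d x ∈ W) := by
    intro l
    induction l with
    | nil =>
      intro _ v₀ hv₀I hv₀hom
      refine ⟨Submodule.span F {v₀}, Submodule.mem_span_singleton_self v₀, ?_, ?_, ?_, ?_⟩
      · infer_instance
      · exact aux_span_graded 𝒜 {v₀} (by rintro s rfl; exact hv₀hom)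
      · rw [Submodule.span_le, Set.singleton_subset_iff]; exact hv₀I
      · simp
    | cons d l ih =>
      intro hl v₀ hv₀I hv₀hom
      obtain ⟨W, hvW, hWfd, hWgr, hWI, hWst⟩ :=
        ih (fun d' hd' => hl d' (List.mem_cons_of_mem d hd')) v₀ hv₀I hv₀hom
      haveI := hWfd
      obtain ⟨hdD, γ, hdhom⟩ := hl d (List.mem_cons_self)
      have hWSh : W ≤ Submodule.span F {a : A | a ∈ W ∧ ∃ μ : Γ, a ∈ 𝒜 μ} := by
        intro x hx
        rw [← DirectSum.sum_support_decompose 𝒜 x]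
        exact Submodule.sum_mem _ fun μ _ =>
          Submodule.subset_span ⟨hWgr x hx μ, μ, SetLike.coe_mem _⟩
      obtain ⟨T', hT'sub, hWT'⟩ := aux_exists_finset W hWfd _ hWSh
      have hT'W : ∀ t : A, t ∈ T' → t ∈ W := fun t ht => (hT'sub ht).1
      set G : Set A := ⋃ t : {x // x ∈ T'}, Set.range fun n : ℕ => (d ^ n) t.1 with hGdef
      set C : Submodule F A := Submodule.span F G with hCdef
      haveI : ∀ t : {x // x ∈ T'},
          FiniteDimensional F (Submodule.span F (Set.range fun n : ℕ => (d ^ n) t.1)) :=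
        fun t => hDlf d hdD t.1
      haveI hCfd : FiniteDimensional F C := by
        rw [hCdef, hGdef, Submodule.span_iUnion]
        infer_instance
      have hgen : ∀ t : A, ∀ ht : t ∈ T', ∀ n : ℕ, (d ^ n) t ∈ C := by
        intro t ht n
        exact Submodule.subset_span (Set.mem_iUnion.mpr ⟨⟨t, ht⟩, ⟨n, rfl⟩⟩)
      have hWC : ∀ n : ℕ, ∀ x ∈ W, (d ^ n) x ∈ C := by
        intro n x hx
        have h1 : (d ^ n) x ∈ Submodule.map (d ^ n) (Submodule.span F (T' : Set A)) :=
          Submodule.mem_map_of_mem (hWT' hx)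
        rw [Submodule.map_span] at h1
        refine Submodule.span_le.mpr ?_ h1
        rintro _ ⟨t, ht, rfl⟩
        exact hgen t (Finset.mem_coe.mp ht) n
      have hWleC : W ≤ C := fun x hx => by simpa using hWC 0 x hx
      have hGmem : ∀ s ∈ G, ∃ t : A, ∃ _ : t ∈ T', ∃ n : ℕ, s = (d ^ n) t := by
        intro s hs
        obtain ⟨t, n, rfl⟩ := Set.mem_iUnion.mp hs
        exact ⟨t.1, t.2, n, rfl⟩
      have hpowhom : ∀ t : A, (∃ μ : Γ, t ∈ 𝒜 μ) → ∀ n : ℕ, ∃ ν : Γ, (d ^ n) t ∈ 𝒜 ν := by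
        rintro t ⟨μ, hμ⟩ n
        induction n with
        | zero => exact ⟨μ, by simpa using hμ⟩
        | succ n ihn =>
          obtain ⟨ν, hν⟩ := ihn
          refine ⟨γ + ν, ?_⟩
          rw [pow_succ', Module.End.mul_apply]
          exact hdhom.1 ν _ hν
      have hpowI : ∀ t : A, t ∈ I → ∀ n : ℕ, (d ^ n) t ∈ I := by
        intro t ht n
        induction n with
        | zero => simpa using ht
        | succ n ihn =>
          rw [pow_succ', Module.End.mul_apply]
          exact hID d hdD _ ihn
      refine ⟨C, hWleC hvW, hCfd, ?_, ?_, ?_⟩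
      · rw [hCdef]
        refine aux_span_graded 𝒜 G ?_
        intro s hs
        obtain ⟨t, ht, n, rfl⟩ := hGmem s hs
        exact hpowhom t (hT'sub ht).2 n
      · rw [hCdef, Submodule.span_le]
        intro s hs
        obtain ⟨t, ht, n, rfl⟩ := hGmem s hs
        exact hpowI t (hWI (hT'W t ht)) n
      · intro d'' hd'' x hx
        rcases List.mem_cons.mp hd'' with h | h
        · subst h
          have h1 : d'' x ∈ Submodule.map d'' C := Submodule.mem_map_of_mem hx
          rw [hCdef, Submodule.map_span] at h1
          refine Submodule.span_le.mpr ?_ h1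
          rintro _ ⟨s, hs, rfl⟩
          obtain ⟨t, ht, n, rfl⟩ := hGmem s hs
          rw [← Module.End.mul_apply, ← pow_succ']
          exact hgen t ht (n + 1)
        · obtain ⟨hd'D, γ', hd'hom⟩ := hl d'' (List.mem_cons_of_mem d h)
          have hcm := hDcomm d'' d hd'D hdD γ' γ hd'hom hdhom
          have h1 : d'' x ∈ Submodule.map d'' C := Submodule.mem_map_of_mem hx
          rw [hCdef, Submodule.map_span] at h1
          refine Submodule.span_le.mpr ?_ h1
          rintro _ ⟨s, hs, rfl⟩
          obtain ⟨t, ht, n, rfl⟩ := hGmem s hs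
          have h2 := DFunLike.congr_fun (aux_pow_comm hcm n) t
          simp only [Module.End.mul_apply, LinearMap.smul_apply] at h2
          rw [h2]
          exact Submodule.smul_mem _ _ (hWC n _ (hWst d'' h t (hT'W t ht)))
  -- Step B: shrink to a common eigenspace
  have stepB : ∀ l : List (Module.End F A), (∀ d ∈ l, d ∈ T) →
      ∀ W : Submodule F A, W ≠ ⊥ → FiniteDimensional F W →
      (∀ x ∈ W, ∀ γ : Γ, (DirectSum.decompose 𝒜 x γ : A) ∈ W) →
      (∀ d ∈ T, ∀ x ∈ W, d x ∈ W) →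
      ∃ W' : Submodule F A, W' ≤ W ∧ W' ≠ ⊥ ∧
        (∀ x ∈ W', ∀ γ : Γ, (DirectSum.decompose 𝒜 x γ : A) ∈ W') ∧
        (∀ d ∈ T, ∀ x ∈ W', d x ∈ W') ∧
        (∀ d ∈ l, ∃ c : F, ∀ x ∈ W', d x = c • x) := by
    intro l
    induction l with
    | nil =>
      intro _ W hWne hWfd hWgr hWst
      exact ⟨W, le_rfl, hWne, hWgr, hWst, by simp⟩
    | cons d l ih =>
      intro hl W hWne hWfd hWgr hWst
      haveI := hWfd
      have hdT := hl d (List.mem_cons_self)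
      obtain ⟨hdD, γ, hdhom⟩ := hTS hdT
      have hres : ∀ x ∈ W, d x ∈ W := hWst d hdT
      haveI : Nontrivial W := Submodule.nontrivial_iff_ne_bot.mpr hWne
      obtain ⟨c₀, hc₀⟩ := Module.End.exists_eigenvalue (d.restrict hres)
      obtain ⟨v, hv⟩ := hc₀.exists_hasEigenvector
      have hveq : d (v : A) = c₀ • (v : A) := by
        have h2 := congrArg Subtype.val hv.apply_eq_smul
        rw [LinearMap.restrict_coe_apply] at h2
        simpa using h2
      have hvne : (v : A) ≠ 0 := fun h => hv.2 (ZeroMemClass.coe_eq_zero.mp h)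
      obtain ⟨γ', hw0⟩ := hcompex _ hvne
      set w : A := (DirectSum.decompose 𝒜 (v : A) γ' : A) with hwdef
      have hwW : w ∈ W := hWgr _ v.2 γ'
      have hw𝒜 : w ∈ 𝒜 γ' := SetLike.coe_mem _
      have hweig : d w = c₀ • w := hDeig d hdD ⟨γ, hdhom⟩ c₀ (v : A) hveq γ'
      have hc : ∃ c : F, d w = c • w ∧ ∀ γ₂ : Γ, ε γ γ₂ * c = c := by
        by_cases hγ0 : γ = 0
        · exact ⟨c₀, hweig, fun γ₂ => by rw [hγ0, hl0, one_mul]⟩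
        · refine ⟨0, ?_, fun γ₂ => mul_zero _⟩
          have hc₀0 : c₀ = 0 := by
            by_contra hcne
            have hdw : d w ∈ 𝒜 (γ + γ') := hdhom.1 γ' w hw𝒜
            have hw2 : w ∈ 𝒜 (γ + γ') := by
              have hwe : w = c₀⁻¹ • d w := by
                rw [hweig, smul_smul, inv_mul_cancel₀ hcne, one_smul]
              rw [hwe]
              exact Submodule.smul_mem _ _ hdw
            have hnee : γ + γ' ≠ γ' := fun h => hγ0 (by rwa [add_eq_right] at h)
            have h3 := DirectSum.decompose_of_mem_ne 𝒜 hw2 hnee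
            rw [DirectSum.decompose_of_mem_same 𝒜 hw𝒜] at h3
            exact hw0 h3
          rw [hweig, hc₀0]
      obtain ⟨c, hwc, hεc⟩ := hc
      set E : Submodule F A := W ⊓ LinearMap.ker (d - c • LinearMap.id) with hEdef
      have hmemE : ∀ x : A, x ∈ E ↔ x ∈ W ∧ d x = c • x := by
        intro x
        rw [hEdef, Submodule.mem_inf, LinearMap.mem_ker, LinearMap.sub_apply,
          LinearMap.smul_apply, LinearMap.id_apply, sub_eq_zero]
      have hEW : E ≤ W := inf_le_left
      have hEne : E ≠ ⊥ := by
        intro h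
        have hwE : w ∈ E := (hmemE w).mpr ⟨hwW, hwc⟩
        rw [h] at hwE
        exact hw0 ((Submodule.mem_bot F).mp hwE)
      haveI hEfd : FiniteDimensional F E := Submodule.finiteDimensional_of_le hEW
      have hEgr : ∀ x ∈ E, ∀ μ : Γ, (DirectSum.decompose 𝒜 x μ : A) ∈ E := by
        intro x hx μ
        obtain ⟨hxW, hxe⟩ := (hmemE x).mp hx
        exact (hmemE _).mpr ⟨hWgr x hxW μ, hDeig d hdD ⟨γ, hdhom⟩ c x hxe μ⟩
      have hEst : ∀ d' ∈ T, ∀ x ∈ E, d' x ∈ E := by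
        intro d' hd'T x hx
        obtain ⟨hxW, hxe⟩ := (hmemE x).mp hx
        obtain ⟨hd'D, γ₂, hd'hom⟩ := hTS hd'T
        refine (hmemE _).mpr ⟨hWst d' hd'T x hxW, ?_⟩
        have h1 := DFunLike.congr_fun (hDcomm d d' hdD hd'D γ γ₂ hdhom hd'hom) x
        simp only [Module.End.mul_apply, LinearMap.smul_apply] at h1
        rw [h1, hxe, map_smul, smul_smul, hεc]
      obtain ⟨W', hW'E, hW'ne, hW'gr, hW'st, hW'eig⟩ :=
        ih (fun d' hd' => hl d' (List.mem_cons_of_mem d hd')) E hEne hEfd hEgr hEst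
      refine ⟨W', le_trans hW'E hEW, hW'ne, hW'gr, hW'st, ?_⟩
      intro d'' hd''
      rcases List.mem_cons.mp hd'' with h | h
      · subst h
        exact ⟨c, fun x hx => ((hmemE x).mp (hW'E hx)).2⟩
      · exact hW'eig d'' h
  -- Assemble
  obtain ⟨x₀, hx₀I, hx₀ne⟩ := (Submodule.ne_bot_iff I).mp hIbot
  obtain ⟨γ₀, hv₀ne⟩ := hcompex x₀ hx₀ne
  have hv₀I : (DirectSum.decompose 𝒜 x₀ γ₀ : A) ∈ I := hIgr x₀ hx₀I γ₀
  obtain ⟨W₀, hv₀W, hW₀fd, hW₀gr, hW₀I, hW₀st⟩ :=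
    stepA T.toList (fun d hd => hTS (Finset.mem_toList.mp hd)) _ hv₀I ⟨γ₀, SetLike.coe_mem _⟩
  have hW₀st' : ∀ d ∈ T, ∀ x ∈ W₀, d x ∈ W₀ := fun d hd => hW₀st d (Finset.mem_toList.mpr hd)
  have hW₀ne : W₀ ≠ ⊥ := by
    intro h
    rw [h] at hv₀W
    exact hv₀ne ((Submodule.mem_bot F).mp hv₀W)
  obtain ⟨Wf, hWfW₀, hWfne, hWfgr, hWfst, hWfeig⟩ :=
    stepB T.toList (fun d hd => Finset.mem_toList.mp hd) W₀ hW₀ne hW₀fd hW₀gr hW₀st'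
  have hWfeig' : ∀ d ∈ T, ∃ c : F, ∀ x ∈ Wf, d x = c • x :=
    fun d hd => hWfeig d (Finset.mem_toList.mpr hd)
  obtain ⟨y, hyWf, hyne⟩ := (Submodule.ne_bot_iff Wf).mp hWfne
  obtain ⟨γu, hune⟩ := hcompex y hyne
  have huWf : (DirectSum.decompose 𝒜 y γu : A) ∈ Wf := hWfgr y hyWf γu
  have huI : (DirectSum.decompose 𝒜 y γu : A) ∈ I := hW₀I (hWfW₀ huWf)
  have hueig : ∀ d : Module.End F A, d ∈ D →
      ∃ c : F, d (DirectSum.decompose 𝒜 y γu : A) = c • (DirectSum.decompose 𝒜 y γu : A) := by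
    intro d hd
    have hd' : d ∈ Submodule.span F (T : Set (Module.End F A)) := hDT hd
    clear hd
    induction hd' using Submodule.span_induction with
    | mem d hdT =>
      obtain ⟨c, hc⟩ := hWfeig' d (Finset.mem_coe.mp hdT)
      exact ⟨c, hc _ huWf⟩
    | zero => exact ⟨0, by simp⟩
    | add d₁ d₂ h₁ h₂ ih₁ ih₂ =>
      obtain ⟨c₁, hc₁⟩ := ih₁
      obtain ⟨c₂, hc₂⟩ := ih₂
      exact ⟨c₁ + c₂, by rw [LinearMap.add_apply, hc₁, hc₂, add_smul]⟩
    | smul a d₁ h₁ ih₁ =>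
      obtain ⟨c₁, hc₁⟩ := ih₁
      exact ⟨a * c₁, by rw [LinearMap.smul_apply, hc₁, smul_smul]⟩
  have hu : IsUnit (DirectSum.decompose 𝒜 y γu : A) :=
    hroots _ hune ⟨γu, SetLike.coe_mem _⟩ (fun d hd _ => hueig d hd)
  obtain ⟨un, hun⟩ := hu
  have h1 : (1 : A) ∈ I := by
    have h2 := (hIdeal (↑un⁻¹) _ huI).1
    rw [← hun, Units.inv_mul] at h2
    exact h2
  rw [Submodule.eq_top_iff']
  intro a
  have h3 := (hIdeal a 1 h1).1
  rwa [mul_one] at h3
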